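/- Let G be a group with finite generating set X and H ≤ G with H ≤ ⟨Y⟩ for a finite set Y of words over X. Suppose G has decidable word problem and the distortion function Dist_{(G,X)}^{(H,Y)} is computable. Then the membership problem for (G, ⟨Y⟩ ∩ witnesses of H) is decidable in the following sense: an element g ∈ G given by a word w over X lies in H only if there is a word w' over Y with |w'| ≤ Dist_{(G,X)}^{(H,Y)}(|w|) representing g; in particular if H = ⟨Y⟩ then membership in H is decidable. -/

import Mathlib

/-- Word length of `g` with respect to the (symmetrized) set `S`. -/
noncomputable def wlen {G : Type*} [Group G] (S : Set G) (g : G) : ℕ :=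
  sInf {n | ∃ l : List G, (∀ x ∈ l, x ∈ S ∨ x⁻¹ ∈ S) ∧ l.prod = g ∧ l.length = n}

/-- Distortion function `Dist_{(G,X)}^{(H,Y)}(n) = max{|h|_Y : h ∈ H, |h|_X ≤ n}`. -/
noncomputable def distortion {G : Type*} [Group G] (X Y : Set G) (H : Subgroup G) (n : ℕ) : ℕ :=
  sSup {m | ∃ h ∈ H, wlen X h ≤ n ∧ wlen Y h = m}

/-- Evaluation of a word (letters with signs) over the generators `x`. -/
def evalWord {G : Type*} [Group G] {m : ℕ} (x : Fin m → G) (w : List (Fin m × Bool)) : G :=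
  (w.map fun p => if p.2 then x p.1 else (x p.1)⁻¹).prod

/-! ### Auxiliary definitions for the decision procedure -/

/-- The alphabet of signed letters over `Fin k`. -/
def alphabetL (k : ℕ) : List (Fin k × Bool) :=
  (List.finRange k).flatMap fun i => [(i, true), (i, false)]

/-- All words of exact length `n` over the alphabet `Fin k × Bool`. -/
def exactWords (k : ℕ) : ℕ → List (List (Fin k × Bool)) :=
  Nat.rec [[]] fun _ acc => acc.flatMap fun w => (alphabetL k).map (· :: w)

/-- All words of length at most `n`. -/
def allWords (k n : ℕ) : List (List (Fin k × Bool)) :=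
  (List.range (n + 1)).flatMap (exactWords k)

/-- The formal inverse of a word. -/
def wordInv {k : ℕ} (w : List (Fin k × Bool)) : List (Fin k × Bool) :=
  (w.map fun p => (p.1, !p.2)).reverse

/-- Expand a word over `Y` into a word over `X`. -/
def expandW {m m' : ℕ} (y : Fin m' → List (Fin m × Bool)) (w' : List (Fin m' × Bool)) :
    List (Fin m × Bool) :=
  w'.flatMap fun p => if p.2 then y p.1 else wordInv (y p.1)

section Lemmas

variable {G : Type*} [Group G] {m k : ℕ} {x : Fin m → G}

theorem evalWord_nil (x : Fin m → G) : evalWord x [] = 1 := rfl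

theorem evalWord_cons (x : Fin m → G) (p : Fin m × Bool) (w : List (Fin m × Bool)) :
    evalWord x (p :: w) = (if p.2 then x p.1 else (x p.1)⁻¹) * evalWord x w := by
  simp [evalWord]

theorem evalWord_append (x : Fin m → G) (u v : List (Fin m × Bool)) :
    evalWord x (u ++ v) = evalWord x u * evalWord x v := by
  simp [evalWord]

theorem evalWord_wordInv (x : Fin m → G) (w : List (Fin m × Bool)) :
    evalWord x (wordInv w) = (evalWord x w)⁻¹ := by
  induction w with
  | nil => simp [wordInv, evalWord]
  | cons p t ih =>
    have h1 : wordInv (p :: t) = wordInv t ++ [(p.1, !p.2)] := by simp [wordInv]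
    have h2 : evalWord x [(p.1, !p.2)] = (if p.2 then x p.1 else (x p.1)⁻¹)⁻¹ := by
      rcases p with ⟨i, b⟩; cases b <;> simp [evalWord]
    rw [h1, evalWord_append, ih, h2, evalWord_cons, mul_inv_rev]

theorem evalWord_expandW {m' : ℕ} (x : Fin m → G) (y : Fin m' → List (Fin m × Bool))
    (w' : List (Fin m' × Bool)) :
    evalWord x (expandW y w') = evalWord (fun i => evalWord x (y i)) w' := by
  induction w' with
  | nil => rfl
  | cons p t ih =>
    have : expandW y (p :: t) = (if p.2 then y p.1 else wordInv (y p.1)) ++ expandW y t := by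
      simp [expandW]
    rw [this, evalWord_append, ih, evalWord_cons]
    cases hb : p.2 <;> simp [hb, evalWord_wordInv]

theorem evalWord_mem_closure (x : Fin m → G) (w : List (Fin m × Bool)) :
    evalWord x w ∈ Subgroup.closure (Set.range x) := by
  refine list_prod_mem fun g hg => ?_
  simp only [List.mem_map] at hg
  obtain ⟨⟨i, b⟩, -, rfl⟩ := hg
  cases b
  · exact inv_mem (Subgroup.subset_closure ⟨i, rfl⟩)
  · exact Subgroup.subset_closure ⟨i, rfl⟩

/-- Every element of a closure is a product of generators and inverses. -/
theorem exists_list_of_mem_closure' {S : Set G} {g : G} (hg : g ∈ Subgroup.closure S) :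
    ∃ l : List G, (∀ a ∈ l, a ∈ S ∨ a⁻¹ ∈ S) ∧ l.prod = g := by
  rw [← Subgroup.mem_toSubmonoid, Subgroup.closure_toSubmonoid] at hg
  obtain ⟨l, hl, hprod⟩ := Submonoid.exists_list_of_mem_closure hg
  refine ⟨l, fun a ha => ?_, hprod⟩
  rcases hl a ha with h | h
  · exact Or.inl h
  · exact Or.inr h

theorem wlen_set_nonempty {S : Set G} {g : G} (hg : g ∈ Subgroup.closure S) :
    {n | ∃ l : List G, (∀ a ∈ l, a ∈ S ∨ a⁻¹ ∈ S) ∧ l.prod = g ∧ l.length = n}.Nonempty := by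
  obtain ⟨l, hl, hprod⟩ := exists_list_of_mem_closure' hg
  exact ⟨l.length, l, hl, hprod, rfl⟩

/-- The word length is attained by a list. -/
theorem exists_list_wlen {S : Set G} {g : G} (hg : g ∈ Subgroup.closure S) :
    ∃ l : List G, (∀ a ∈ l, a ∈ S ∨ a⁻¹ ∈ S) ∧ l.prod = g ∧ l.length = wlen S g :=
  Nat.sInf_mem (wlen_set_nonempty hg)

theorem wlen_evalWord_le (x : Fin m → G) (w : List (Fin m × Bool)) :
    wlen (Set.range x) (evalWord x w) ≤ w.length := by
  have hmem : ∀ a ∈ w.map fun p : Fin m × Bool => if p.2 then x p.1 else (x p.1)⁻¹,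
      a ∈ Set.range x ∨ a⁻¹ ∈ Set.range x := by
    intro a ha
    simp only [List.mem_map] at ha
    obtain ⟨⟨i, b⟩, -, rfl⟩ := ha
    cases b
    · exact Or.inr (by simp)
    · exact Or.inl ⟨i, by simp⟩
  refine Nat.sInf_le ⟨w.map fun p => if p.2 then x p.1 else (x p.1)⁻¹, hmem, ?_, by simp⟩
  rfl

/-- From a list of generators and inverses, produce a formal word evaluating to the product. -/
theorem exists_word_of_list (z : Fin k → G) (l : List G)
    (hl : ∀ a ∈ l, a ∈ Set.range z ∨ a⁻¹ ∈ Set.range z) :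
    ∃ w : List (Fin k × Bool), w.length = l.length ∧ evalWord z w = l.prod := by
  induction l with
  | nil => exact ⟨[], rfl, rfl⟩
  | cons a t ih =>
    obtain ⟨w, hw1, hw2⟩ := ih fun b hb => hl b (List.mem_cons_of_mem a hb)
    rcases hl a List.mem_cons_self with ⟨i, hi⟩ | ⟨i, hi⟩
    · refine ⟨(i, true) :: w, by simp [hw1], ?_⟩
      rw [evalWord_cons, hw2, List.prod_cons]
      simp [hi]
    · refine ⟨(i, false) :: w, by simp [hw1], ?_⟩
      rw [evalWord_cons, hw2, List.prod_cons]
      have : (z i)⁻¹ = a := by rw [hi, inv_inv]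
      simp [this]

theorem mem_exactWords {w : List (Fin k × Bool)} : w ∈ exactWords k w.length := by
  induction w with
  | nil => simp [exactWords]
  | cons a t ih =>
    have ha : a ∈ alphabetL k := by
      rcases a with ⟨i, b⟩
      refine List.mem_flatMap.2 ⟨i, List.mem_finRange i, ?_⟩
      cases b <;> simp
    show a :: t ∈ (exactWords k t.length).flatMap fun w => (alphabetL k).map (· :: w)
    simp only [List.mem_flatMap, List.mem_map]
    exact ⟨t, ih, a, ha, rfl⟩

theorem mem_allWords {n : ℕ} {w : List (Fin k × Bool)} (hw : w.length ≤ n) :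
    w ∈ allWords k n := by
  simp only [allWords, List.mem_flatMap, List.mem_range]
  exact ⟨w.length, Nat.lt_succ_of_le hw, mem_exactWords⟩

end Lemmas

section Computability

open Primrec in
theorem primrec_exactWords (k : ℕ) : Primrec (exactWords k) := by
  have hinner : Primrec fun w : List (Fin k × Bool) => (alphabetL k).map (· :: w) :=
    list_map (const (alphabetL k)) (list_cons.comp snd fst)
  have hstep : Primrec₂ fun (_ : ℕ) (acc : List (List (Fin k × Bool))) =>
      acc.flatMap fun w => (alphabetL k).map (· :: w) :=
    list_flatMap Primrec.snd ((hinner.comp Primrec.snd).to₂)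
  exact nat_rec₁ _ hstep

open Primrec in
theorem primrec_allWords (k : ℕ) : Primrec (allWords k) :=
  list_flatMap (list_range.comp succ) ((primrec_exactWords k).comp snd).to₂

open Primrec in
theorem primrec_wordInv (k : ℕ) : Primrec (@wordInv k) :=
  list_reverse.comp (list_map Primrec.id ((dom_finite fun p : Fin k × Bool => (p.1, !p.2)).comp snd).to₂)

open Primrec in
theorem primrec_expandW {m m' : ℕ} (y : Fin m' → List (Fin m × Bool)) :
    Primrec (expandW y) :=
  list_flatMap Primrec.id
    ((dom_finite fun p : Fin m' × Bool => if p.2 then y p.1 else wordInv (y p.1)).comp snd).to₂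

end Computability

theorem natrec_or_eq_true (f : ℕ → Bool) (n : ℕ) :
    (Nat.rec false (fun k acc => acc || f k) n = true) ↔ ∃ k, k < n ∧ f k = true := by
  induction n with
  | zero => simp
  | succ n ih =>
    show ((Nat.rec false (fun k acc => acc || f k) n : Bool) || f n) = true ↔ _
    rw [Bool.or_eq_true, ih]
    constructor
    · rintro (⟨k, hk, hfk⟩ | hfn)
      exacts [⟨k, Nat.lt_succ_of_lt hk, hfk⟩, ⟨n, Nat.lt_succ_self n, hfn⟩]
    · rintro ⟨k, hk, hfk⟩
      rcases Nat.lt_succ_iff_lt_or_eq.1 hk with h | rfl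
      exacts [Or.inl ⟨k, h, hfk⟩, Or.inr hfk]

theorem stmt10 {G : Type*} [Group G] (H : Subgroup G) (m : ℕ) (x : Fin m → G)
    (hX : Subgroup.closure (Set.range x) = ⊤)
    (m' : ℕ) (y : Fin m' → List (Fin m × Bool))
    (hHY : H ≤ Subgroup.closure (Set.range fun i => evalWord x (y i)))
    -- decidable word problem for G
    (wp : List (Fin m × Bool) → Bool) (hwpComp : Computable wp)
    (hwp : ∀ w, wp w = true ↔ evalWord x w = 1)
    -- a computable function agreeing with the distortion function
    (d : ℕ → ℕ) (hdComp : Computable d)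
    (hd : ∀ n, d n = distortion (Set.range x) (Set.range fun i => evalWord x (y i)) H n) :
    -- a word w over X represents an element of H only if some word w' over Y of length
    -- at most Dist(|w|) represents the same element ...
    (∀ w : List (Fin m × Bool), evalWord x w ∈ H →
        ∃ w' : List (Fin m' × Bool), w'.length ≤ d w.length ∧
          evalWord (fun i => evalWord x (y i)) w' = evalWord x w) ∧
    -- ... and in particular, if H = ⟨Y⟩ then membership in H is decidable
    (Subgroup.closure (Set.range fun i => evalWord x (y i)) = H →
        ∃ mp : List (Fin m × Bool) → Bool, Computable mp ∧
          ∀ w, mp w = true ↔ evalWord x w ∈ H) := by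
  classical
  -- boundedness of the distortion set
  have hBdd : ∀ n : ℕ, BddAbove {k | ∃ h ∈ H, wlen (Set.range x) h ≤ n ∧
      wlen (Set.range fun i => evalWord x (y i)) h = k} := by
    intro n
    have hfin : ((fun w : List (Fin m × Bool) => evalWord x w) '' {w | w.length ≤ n}).Finite :=
      (List.finite_length_le _ n).image _
    refine ((hfin.image (wlen (Set.range fun i => evalWord x (y i)))).subset ?_).bddAbove
    rintro k ⟨h, hH, hle, rfl⟩
    refine ⟨h, ?_, rfl⟩
    have hmem : h ∈ Subgroup.closure (Set.range x) := by rw [hX]; trivial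
    obtain ⟨l, hl, hprod, hlen⟩ := exists_list_wlen hmem
    obtain ⟨w, hw1, hw2⟩ := exists_word_of_list x l hl
    exact ⟨w, by rw [Set.mem_setOf_eq, hw1, hlen]; exact hle, hw2.trans hprod⟩
  have part1 : ∀ w : List (Fin m × Bool), evalWord x w ∈ H →
      ∃ w' : List (Fin m' × Bool), w'.length ≤ d w.length ∧
        evalWord (fun i => evalWord x (y i)) w' = evalWord x w := by
    intro w hw
    have h1 : wlen (Set.range x) (evalWord x w) ≤ w.length := wlen_evalWord_le x w
    have h2 : evalWord x w ∈ Subgroup.closure (Set.range fun i => evalWord x (y i)) := hHY hw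
    obtain ⟨l, hl, hprod, hlen⟩ := exists_list_wlen h2
    have h3 : wlen (Set.range fun i => evalWord x (y i)) (evalWord x w) ≤ d w.length := by
      rw [hd, distortion]
      exact le_csSup (hBdd w.length) ⟨evalWord x w, hw, h1, rfl⟩
    obtain ⟨w', hw'1, hw'2⟩ := exists_word_of_list _ l hl
    exact ⟨w', by rw [hw'1, hlen]; exact h3, by rw [hw'2, hprod]⟩
  refine ⟨part1, fun hEq => ?_⟩
  -- the decision procedure
  set LL : List (Fin m × Bool) → List (List (Fin m × Bool)) :=
    fun w => (allWords m' (d w.length)).map fun w' => wordInv (expandW y w') ++ w with hLLdef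
  have hLLc : Computable LL := by
    have hstep : Primrec fun p : ℕ × List (Fin m × Bool) =>
        (allWords m' p.1).map fun w' => wordInv (expandW y w') ++ p.2 :=
      Primrec.list_map ((primrec_allWords m').comp Primrec.fst)
        ((Primrec.list_append.comp
          ((primrec_wordInv m).comp ((primrec_expandW y).comp Primrec.snd))
          (Primrec.snd.comp Primrec.fst)).to₂)
    exact hstep.to_comp.comp ((hdComp.comp Computable.list_length).pair Computable.id)
  refine ⟨fun w => Nat.rec false (fun k acc => acc || wp ((LL w).getI k)) (LL w).length, ?_, ?_⟩
  · -- computability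
    have hh : Computable fun q : List (Fin m × Bool) × (ℕ × Bool) =>
        q.2.2 || wp ((LL q.1).getI q.2.1) := by
      have hc : Computable fun q : List (Fin m × Bool) × (ℕ × Bool) =>
          wp ((LL q.1).getI q.2.1) :=
        hwpComp.comp (Primrec.list_getI.to_comp.comp (hLLc.comp Computable.fst)
          (Computable.fst.comp Computable.snd))
      exact (Computable.cond (Computable.snd.comp Computable.snd)
        (Computable.const true) hc).of_eq fun q => by cases h : q.2.2 <;> simp [h]
    exact (Computable.nat_rec (Computable.list_length.comp hLLc)
      (Computable.const false) hh.to₂).of_eq fun w => rfl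
  · intro w
    rw [natrec_or_eq_true]
    constructor
    · rintro ⟨k, hk, hfk⟩
      have hu : (LL w).getI k ∈ LL w := by
        rw [List.getI_eq_getElem _ hk]
        exact List.getElem_mem hk
      rw [hLLdef] at hu
      simp only [List.mem_map] at hu
      obtain ⟨w', -, hw'⟩ := hu
      rw [← hw'] at hfk
      rw [hwp] at hfk
      rw [evalWord_append, evalWord_wordInv, evalWord_expandW] at hfk
      have heval : evalWord x w = evalWord (fun i => evalWord x (y i)) w' :=
        (inv_mul_eq_one.mp hfk).symm
      rw [heval, ← hEq]
      exact evalWord_mem_closure _ w'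
    · intro hw
      obtain ⟨w', hw'len, hw'eval⟩ := part1 w hw
      have hmem : (wordInv (expandW y w') ++ w) ∈ LL w := by
        rw [hLLdef]
        exact List.mem_map.2 ⟨w', mem_allWords hw'len, rfl⟩
      obtain ⟨k, hk, hget⟩ := List.mem_iff_getElem.1 hmem
      refine ⟨k, hk, ?_⟩
      rw [List.getI_eq_getElem _ hk, hget, hwp, evalWord_append, evalWord_wordInv,
        evalWord_expandW, hw'eval]
      simp
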